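/- Let H : ℝ → [0,∞) be an even convex function with H(0)=0 such that x ↦ H(x)/x² is non-decreasing on (0,∞), and let H* be its Legendre conjugate. Then for every x > 0: H*(x) ≥ H((H*)'_r(x)/2) ≥ (1/ω_H(2))·H((H*)'_r(x)), where (H*)'_r denotes the right derivative and ω_H(t) = sup_{s>0} H(ts)/H(s). -/

import Mathlib

open Real Set

/-- The Legendre conjugate of `H`: `H*(y) = sup_{x ≥ 0} (x·|y| − H(x))`. -/
noncomputable def youngConj (H : ℝ → ℝ) (y : ℝ) : ℝ :=
  sSup ((fun x => x * |y| - H x) '' Set.Ici 0)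

/-- `ω_H(t) = sup_{s > 0} H(ts)/H(s)`. -/
noncomputable def omegaH (H : ℝ → ℝ) (t : ℝ) : ℝ :=
  ⨆ s : {s : ℝ // 0 < s}, H (t * s) / H s

/-- An even convex function vanishing at `0` is monotone on `[0, ∞)`. -/
lemma even_convex_monotoneOn (H : ℝ → ℝ) (heven : ∀ x, H (-x) = H x)
    (hconv : ConvexOn ℝ Set.univ H) : MonotoneOn H (Set.Ici 0) := by
  intro a ha b hb hab
  simp only [mem_Ici] at ha hb
  rcases eq_or_lt_of_le hb with hb0 | hb0
  · have : a = 0 := le_antisymm (hab.trans hb0.symm.le) ha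
    rw [this, ← hb0]
  · set θ : ℝ := (a + b) / (2 * b) with hθdef
    have hθ0 : 0 ≤ θ := by positivity
    have hθ1 : θ ≤ 1 := by
      rw [div_le_one (by linarith)]
      linarith
    have h1θ : 0 ≤ 1 - θ := by linarith
    have hsum : θ + (1 - θ) = 1 := by ring
    have hcomb := hconv.2 (mem_univ b) (mem_univ (-b)) hθ0 h1θ hsum
    have harg : θ • b + (1 - θ) • (-b) = a := by
      simp only [smul_eq_mul, hθdef]
      field_simp
      ring
    rw [harg] at hcomb
    calc H a ≤ θ * H b + (1 - θ) * H (-b) := hcomb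
      _ = H b := by rw [heven]; ring

set_option maxHeartbeats 2000000 in
/-- For an even convex `H ≥ 0` with `H(0)=0` and `H(x)/x²` non-decreasing on
`(0,∞)`, for every `x > 0`:
`H*(x) ≥ H((H*)'_r(x)/2) ≥ (1/ω_H(2))·H((H*)'_r(x))`, where `(H*)'_r` is the right
derivative of the Legendre conjugate. -/
theorem stmt6 (H : ℝ → ℝ)
    (heven : ∀ x, H (-x) = H x)
    (hconv : ConvexOn ℝ Set.univ H)
    (hnonneg : ∀ x, 0 ≤ H x)
    (h0 : H 0 = 0)
    (hmono : MonotoneOn (fun x => H x / x ^ 2) (Set.Ioi 0))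
    (hfin : BddAbove (Set.range fun s : {s : ℝ // 0 < s} => H (2 * s) / H s)) :
    ∀ x > (0:ℝ),
      (1 / omegaH H 2) * H (derivWithin (youngConj H) (Set.Ici x) x)
          ≤ H (derivWithin (youngConj H) (Set.Ici x) x / 2) ∧
      H (derivWithin (youngConj H) (Set.Ici x) x / 2) ≤ youngConj H x := by
  have hHcont : Continuous H := by
    exact continuousOn_univ.mp (hconv.continuousOn isOpen_univ)
  have hHmono : MonotoneOn H (Set.Ici 0) := even_convex_monotoneOn H heven hconv
  intro x hx
  by_cases hH0 : ∀ s > (0:ℝ), H s = 0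
  · -- degenerate case: H ≡ 0
    have hHz : ∀ s : ℝ, H s = 0 := by
      intro s
      rcases lt_trichotomy s 0 with h | h | h
      · rw [← heven]; exact hH0 _ (by linarith)
      · rw [h]; exact h0
      · exact hH0 s h
    have hbz : ∀ y : ℝ, y ≠ 0 → youngConj H y = 0 := by
      intro y hy
      apply Real.sSup_of_not_bddAbove
      rintro ⟨M, hM⟩
      have hay : 0 < |y| := abs_pos.2 hy
      have hmem : (|M| + 1) / |y| * |y| - H ((|M| + 1) / |y|)
          ∈ (fun x => x * |y| - H x) '' Set.Ici 0 :=
        ⟨(|M| + 1) / |y|, mem_Ici.2 (by positivity), rfl⟩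
      have := hM hmem
      rw [hHz, div_mul_cancel₀ _ hay.ne'] at this
      have : |M| + 1 ≤ M := by linarith
      have := le_abs_self M
      linarith
    have hDz : derivWithin (youngConj H) (Set.Ici x) x = 0 := by
      have heq : Set.EqOn (youngConj H) (fun _ => (0:ℝ)) (Set.Ici x) := by
        intro y hy
        exact hbz y (by have : (0:ℝ) < y := lt_of_lt_of_le hx hy; exact this.ne')
      rw [derivWithin_congr heq (heq self_mem_Ici)]
      exact congrFun (derivWithin_const _ _) x
    rw [hDz, hbz x hx.ne']
    norm_num [h0]
  · -- nondegenerate case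
    push_neg at hH0
    obtain ⟨s₀, hs₀pos, hs₀ne⟩ := hH0
    have hs₀ : 0 < H s₀ := (hnonneg s₀).lt_of_ne (Ne.symm hs₀ne)
    set c : ℝ := H s₀ / s₀ ^ 2 with hcdef
    have hc : 0 < c := by positivity
    have hquad : ∀ t : ℝ, s₀ ≤ t → c * t ^ 2 ≤ H t := by
      intro t ht
      have htpos : 0 < t := lt_of_lt_of_le hs₀pos ht
      have := hmono (mem_Ioi.2 hs₀pos) (mem_Ioi.2 htpos) ht
      simp only at this
      rw [hcdef]
      calc H s₀ / s₀ ^ 2 * t ^ 2 ≤ H t / t ^ 2 * t ^ 2 := by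
            apply mul_le_mul_of_nonneg_right this (by positivity)
        _ = H t := by field_simp
    have hbdd : ∀ y : ℝ, BddAbove ((fun t => t * |y| - H t) '' Set.Ici 0) := by
      intro y
      refine ⟨s₀ * |y| + y ^ 2 / (4 * c), ?_⟩
      rintro _ ⟨t, ht, rfl⟩
      simp only [mem_Ici] at ht
      rcases le_or_gt t s₀ with h | h
      · have h1 : t * |y| ≤ s₀ * |y| := mul_le_mul_of_nonneg_right h (abs_nonneg y)
        have h2 : 0 ≤ H t := hnonneg t
        have h3 : 0 ≤ y ^ 2 / (4 * c) := by positivity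
        linarith
      · have h1 := hquad t h.le
        have h4c : (0:ℝ) < 4 * c := by positivity
        have h2 : (t * |y| - c * t ^ 2) * (4 * c) ≤ y ^ 2 := by
          nlinarith [sq_nonneg (2 * c * t - |y|), sq_abs y]
        have h2' : t * |y| - c * t ^ 2 ≤ y ^ 2 / (4 * c) := (le_div_iff₀ h4c).mpr h2
        have h3 : 0 ≤ s₀ * |y| := by positivity
        linarith
    have hmemb : ∀ y t : ℝ, 0 ≤ t → t * |y| - H t ≤ youngConj H y := by
      intro y t ht
      exact le_csSup (hbdd y) ⟨t, ht, rfl⟩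
    have hble : ∀ (y M : ℝ), (∀ t : ℝ, 0 ≤ t → t * |y| - H t ≤ M) → youngConj H y ≤ M := by
      intro y M hM
      show sSup ((fun t => t * |y| - H t) '' Set.Ici 0) ≤ M
      have hne : ((fun t => t * |y| - H t) '' Set.Ici 0).Nonempty :=
        ⟨0 * |y| - H 0, ⟨0, self_mem_Ici, rfl⟩⟩
      apply csSup_le hne
      rintro _ ⟨t, ht, rfl⟩
      exact hM t ht
    have hb_nonneg : ∀ y : ℝ, 0 ≤ youngConj H y := by
      intro y
      have := hmemb y 0 le_rfl
      simpa [h0] using this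
    have hbmono : ∀ y z : ℝ, 0 ≤ y → y ≤ z → youngConj H y ≤ youngConj H z := by
      intro y z hy hyz
      apply hble
      intro t ht
      calc t * |y| - H t ≤ t * |z| - H t := by
            have : |y| ≤ |z| := by
              rw [abs_of_nonneg hy, abs_of_nonneg (hy.trans hyz)]; exact hyz
            nlinarith
        _ ≤ youngConj H z := hmemb z t ht
    -- quadratic growth comparison for the conjugate
    have hbquad : ∀ y : ℝ, x < y → youngConj H y ≤ (y / x) ^ 2 * youngConj H x := by
      intro y hxy
      have hy : 0 < y := hx.trans hxy
      apply hble
      intro t ht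
      rcases eq_or_lt_of_le ht with ht0 | htpos
      · rw [← ht0]
        simp only [zero_mul, zero_sub, h0, neg_zero]
        exact mul_nonneg (by positivity) (hb_nonneg x)
      · set r : ℝ := x / y with hrdef
        have hr0 : 0 < r := by positivity
        have hrt : 0 < r * t := by positivity
        have hrle : r * t ≤ t := by
          have : r ≤ 1 := by rw [hrdef, div_le_one hy]; linarith
          nlinarith
        have h1 : r * t * |x| - H (r * t) ≤ youngConj H x := hmemb x (r * t) hrt.le
        have h2 := hmono (mem_Ioi.2 hrt) (mem_Ioi.2 htpos) hrle
        simp only at h2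
        rw [div_le_div_iff₀ (by positivity) (by positivity)] at h2
        -- h2 : H (r*t) * t^2 ≤ H t * (r*t)^2
        have hHrt : H (r * t) * y ^ 2 ≤ H t * x ^ 2 := by
          have hexp : (r * t) ^ 2 = x ^ 2 * t ^ 2 / y ^ 2 := by
            rw [hrdef]; field_simp
          rw [hexp] at h2
          have ht2 : 0 < t ^ 2 := by positivity
          have e1 : H (r * t) * t ^ 2 * y ^ 2 ≤ H t * (x ^ 2 * t ^ 2 / y ^ 2) * y ^ 2 :=
            mul_le_mul_of_nonneg_right h2 (by positivity)
          have e2 : H t * (x ^ 2 * t ^ 2 / y ^ 2) * y ^ 2 = H t * x ^ 2 * t ^ 2 := by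
            field_simp
          rw [e2] at e1
          have e3 : H (r * t) * y ^ 2 * t ^ 2 ≤ H t * x ^ 2 * t ^ 2 := by linarith [e1]
          exact le_of_mul_le_mul_right e3 ht2
        rw [abs_of_pos hy]
        rw [abs_of_pos hx] at h1
        have hgoal : (t * y - H t) * x ^ 2 ≤ y ^ 2 * youngConj H x := by
          have h1' : (r * t * x - H (r * t)) * y ^ 2 ≤ youngConj H x * y ^ 2 :=
            mul_le_mul_of_nonneg_right h1 (by positivity)
          have he : r * t * x * y ^ 2 = t * y * x ^ 2 := by
            rw [hrdef]; field_simp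
          nlinarith
        have : (y / x) ^ 2 * youngConj H x = y ^ 2 * youngConj H x / x ^ 2 := by
          ring
        rw [this, le_div_iff₀ (by positivity : (0:ℝ) < x ^ 2)]
        linarith
    -- H(b x / x) ≤ b x
    have hubx : H (youngConj H x / x) ≤ youngConj H x := by
      set u : ℝ := youngConj H x / x with hudef
      have hu : 0 ≤ u := div_nonneg (hb_nonneg x) hx.le
      have hux : u * x = youngConj H x := div_mul_cancel₀ _ hx.ne'
      rcases eq_or_lt_of_le hu with hu0 | hupos
      · rw [← hu0, h0]; exact hb_nonneg x
      by_contra hcon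
      push_neg at hcon
      have hHu : 0 < H u := lt_of_le_of_lt (hb_nonneg x) hcon
      obtain ⟨t₀, ht₀mem, ht₀max⟩ := (isCompact_Icc : IsCompact (Icc (0:ℝ) u)).exists_isMaxOn
        ⟨0, left_mem_Icc.2 hu⟩
        (((continuous_id.mul continuous_const).sub hHcont).continuousOn :
          ContinuousOn (fun t : ℝ => t * |x| - H t) (Icc 0 u))
      set m : ℝ := t₀ * |x| - H t₀ with hmdef
      have hmax : ∀ t ∈ Icc (0:ℝ) u, t * |x| - H t ≤ m := isMaxOn_iff.mp ht₀max
      have hm : m < youngConj H x := by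
        rcases eq_or_lt_of_le ht₀mem.2 with heq | hlt
        · rw [hmdef, heq, abs_of_pos hx]
          linarith [hux, hHu]
        · have : m ≤ t₀ * |x| := by rw [hmdef]; linarith [hnonneg t₀]
          have h2 : t₀ * |x| < u * x := by
            rw [abs_of_pos hx]
            exact mul_lt_mul_of_pos_right hlt hx
          rw [← hux]
          linarith
      have hub2 : youngConj H x ≤ max m (youngConj H x - H u) := by
        apply hble
        intro t ht
        rcases le_or_gt t u with htu | htu
        · exact le_max_of_le_left (hmax t ⟨ht, htu⟩)
        · apply le_max_of_le_right
          have htpos : 0 < t := hupos.trans htu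
          have h2 := hmono (mem_Ioi.2 hupos) (mem_Ioi.2 htpos) htu.le
          simp only at h2
          rw [div_le_div_iff₀ (pow_pos hupos 2) (pow_pos htpos 2)] at h2
          -- h2 : H u * t^2 ≤ H t * u^2
          have hHt : t * H u ≤ u * H t := by
            nlinarith [h2, mul_nonneg (mul_nonneg (hnonneg u) htpos.le)
              (sub_nonneg.2 htu.le), hupos]
          -- t * x - H t ≤ u * x - H u given x < H u / u i.e. u * x < H u
          have hux2 : u * x < H u := by rw [hux]; exact hcon
          rw [abs_of_pos hx, ← hux]
          -- t * x - H t ≤ u * x - H u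
          nlinarith [hHt, mul_nonneg (sub_nonneg.2 htu.le) (sub_nonneg.2 hux2.le), hupos]
      have : max m (youngConj H x - H u) < youngConj H x := max_lt hm (by linarith)
      linarith
    -- now deal with the derivative
    by_cases hdiff : DifferentiableWithinAt ℝ (youngConj H) (Set.Ici x) x
    · set D : ℝ := derivWithin (youngConj H) (Set.Ici x) x with hDdef
      have hD : Filter.Tendsto (slope (youngConj H) x) (nhdsWithin x (Set.Ioi x)) (nhds D) := by
        have := hasDerivWithinAt_iff_tendsto_slope.mp hdiff.hasDerivWithinAt
        rwa [Ici_sdiff_left] at this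
      clear_value D
      have hDnn : 0 ≤ D := by
        apply ge_of_tendsto hD
        apply Filter.eventually_of_mem self_mem_nhdsWithin
        intro y hy
        rw [slope_def_field]
        have hy' : x < y := hy
        apply div_nonneg _ (by linarith)
        have := hbmono x y hx.le hy'.le
        linarith
      have hDle : D * x ≤ 2 * youngConj H x := by
        have hg : Filter.Tendsto (fun y => youngConj H x * (y + x) / x ^ 2)
            (nhdsWithin x (Set.Ioi x)) (nhds (youngConj H x * (x + x) / x ^ 2)) := by
          apply Filter.Tendsto.mono_left _ nhdsWithin_le_nhds
          exact ((continuous_const.mul (continuous_id.add continuous_const)).div_const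
            _).tendsto x
        have hle : D ≤ youngConj H x * (x + x) / x ^ 2 := by
          apply le_of_tendsto_of_tendsto hD hg
          apply Filter.eventually_of_mem self_mem_nhdsWithin
          intro y hy
          have hy' : x < y := hy
          rw [slope_def_field]
          have hby := hbquad y hy'
          have hyx : 0 < y - x := by linarith
          rw [div_le_iff₀ hyx]
          have hexpand : youngConj H x * (y + x) / x ^ 2 * (y - x)
              = (y / x) ^ 2 * youngConj H x - youngConj H x := by
            field_simp
            ring
          rw [hexpand]
          linarith
        have hee : youngConj H x * (x + x) / x ^ 2 = 2 * youngConj H x / x := by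
          field_simp
          ring
        rw [hee] at hle
        rwa [← le_div_iff₀ hx]
      have hD2 : D / 2 ≤ youngConj H x / x := by
        rw [div_le_div_iff₀ (by norm_num : (0:ℝ) < 2) hx]
        linarith
      have hsecond : H (D / 2) ≤ youngConj H x := by
        refine le_trans ?_ hubx
        exact hHmono (mem_Ici.2 (by linarith)) (mem_Ici.2 (div_nonneg (hb_nonneg x) hx.le)) hD2
      refine ⟨?_, hsecond⟩
      rcases eq_or_lt_of_le hDnn with hD0 | hDpos
      · rw [← hD0]
        norm_num [h0]
      -- first inequality, D > 0
      by_cases hHD2 : H (D / 2) = 0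
      · have hHD : H D = 0 := by
          by_contra hne
          have hHDpos : 0 < H D := (hnonneg D).lt_of_ne (Ne.symm hne)
          obtain ⟨M, hM⟩ := hfin
          have hMb : ∀ s : ℝ, ∀ hs : 0 < s, H (2 * s) / H s ≤ M := fun s hs =>
            hM (Set.mem_range_self (⟨s, hs⟩ : {s : ℝ // 0 < s}))
          set Z : Set ℝ := Icc (D / 2) D ∩ {s | H s = 0} with hZdef
          have hZne : D / 2 ∈ Z := ⟨⟨le_rfl, by linarith⟩, hHD2⟩
          have hZbdd : BddAbove Z := ⟨D, fun s hs => hs.1.2⟩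
          have hZclosed : IsClosed Z :=
            isClosed_Icc.inter (isClosed_eq hHcont continuous_const)
          set a : ℝ := sSup Z with hadef
          have haZ : a ∈ Z := hZclosed.csSup_mem ⟨_, hZne⟩ hZbdd
          have hale : ∀ s ∈ Z, s ≤ a := fun s hs => le_csSup hZbdd hs
          clear_value a
          have haD : a < D := lt_of_le_of_ne haZ.1.2 (by
            intro h
            rw [h] at haZ
            exact hne haZ.2)
          have ha2 : D / 2 ≤ a := haZ.1.1
          have hHspos : ∀ s : ℝ, a < s → s ≤ D → 0 < H s := by
            intro s has hsD
            rcases (hnonneg s).lt_or_eq with h | h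
            · exact h
            · exfalso
              have : s ≤ a := hale s ⟨⟨by linarith, hsD⟩, h.symm⟩
              linarith
          have hMpos : 0 < M := by
            set s : ℝ := (a + D) / 2 with hsdef
            have has : a < s := by rw [hsdef]; linarith
            have hsD : s ≤ D := by rw [hsdef]; linarith
            have hspos : 0 < s := by linarith [half_pos hDpos]
            have h2s : D ≤ 2 * s := by rw [hsdef]; linarith
            have hH2s : 0 < H (2 * s) :=
              lt_of_lt_of_le hHDpos (hHmono (mem_Ici.2 hDnn) (mem_Ici.2 (by linarith)) h2s)
            exact lt_of_lt_of_le (div_pos hH2s (hHspos s has hsD)) (hMb s hspos)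
          have hkey : ∀ s : ℝ, a < s → s ≤ D → H D / M ≤ H s := by
            intro s has hsD
            have hspos : 0 < s := by linarith [half_pos hDpos]
            have hHs := hHspos s has hsD
            have h2s : D ≤ 2 * s := by linarith
            have h1 : H D ≤ H (2 * s) :=
              hHmono (mem_Ici.2 hDnn) (mem_Ici.2 (by linarith)) h2s
            have h2 := hMb s hspos
            rw [div_le_iff₀ hHs] at h2
            rw [div_le_iff₀ hMpos]
            nlinarith
          have hten : Filter.Tendsto H (nhdsWithin a (Set.Ioi a)) (nhds (H a)) :=
            (hHcont.tendsto a).mono_left nhdsWithin_le_nhds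
          have hfinal : H D / M ≤ H a := by
            apply ge_of_tendsto hten
            apply Filter.eventually_of_mem (Ioc_mem_nhdsGT_of_mem ⟨le_rfl, haD⟩)
            intro s hs
            exact hkey s hs.1 hs.2
          rw [haZ.2] at hfinal
          exact absurd hfinal (not_le.2 (div_pos hHDpos hMpos))
        rw [hHD, hHD2, mul_zero]
      · have hHD2pos : 0 < H (D / 2) := (hnonneg _).lt_of_ne (Ne.symm hHD2)
        have hωge : H D / H (D / 2) ≤ omegaH H 2 := by
          have := le_ciSup hfin (⟨D / 2, half_pos hDpos⟩ : {s : ℝ // 0 < s})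
          simpa [omegaH, show 2 * (D / 2) = D by ring] using this
        have hHDge : H (D / 2) ≤ H D :=
          hHmono (mem_Ici.2 (by linarith)) (mem_Ici.2 hDnn) (by linarith)
        have hωpos : 0 < omegaH H 2 :=
          lt_of_lt_of_le (div_pos (lt_of_lt_of_le hHD2pos hHDge) hHD2pos) hωge
        rw [one_div, inv_mul_le_iff₀ hωpos]
        calc H D ≤ H D / H (D / 2) * H (D / 2) := by
              rw [div_mul_cancel₀ _ hHD2pos.ne']
          _ ≤ omegaH H 2 * H (D / 2) := mul_le_mul_of_nonneg_right hωge hHD2pos.le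
    · rw [derivWithin_zero_of_not_differentiableWithinAt hdiff]
      norm_num [h0]
      exact hb_nonneg x
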